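/- If (a_1,...,a_{n+2}) is a tuple of positive integers with M_{n+2}(a_1,...,a_{n+2}) = ±S (n ≥ 3), then 2 ≤ a_1 + a_{n+2} ≤ n - 1, where S = [[0,-1],[1,0]]. -/

import Mathlib

open Matrix

def E (a : ℤ) : Matrix (Fin 2) (Fin 2) ℤ := !![a, -1; 1, 0]

/-- `M [a₁, …, aₙ] = E aₙ * ⋯ * E a₁`. -/
def M (l : List ℤ) : Matrix (Fin 2) (Fin 2) ℤ :=
  (l.map E).foldl (fun acc x => x * acc) 1

def S : Matrix (Fin 2) (Fin 2) ℤ := !![0, -1; 1, 0]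

def T : Matrix (Fin 2) (Fin 2) ℤ := !![1, 1; 0, 1]

lemma M_nil : M [] = 1 := rfl

lemma foldl_aux (t : List ℤ) : ∀ A : Matrix (Fin 2) (Fin 2) ℤ,
    (t.map E).foldl (fun acc x => x * acc) A = M t * A := by
  induction t with
  | nil => intro A; simp [M]
  | cons c t ih =>
    intro A
    simp only [List.map_cons, List.foldl_cons]
    rw [ih (E c * A)]
    have hc : M (c :: t) = M t * (E c * 1) := by
      rw [M]; simp only [List.map_cons, List.foldl_cons]; exact ih _
    rw [hc, mul_one, mul_assoc]

lemma M_cons (c : ℤ) (t : List ℤ) : M (c :: t) = M t * E c := by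
  rw [M]; simp only [List.map_cons, List.foldl_cons]
  rw [foldl_aux, mul_one]

lemma M_append (s t : List ℤ) : M (s ++ t) = M t * M s := by
  induction s with
  | nil => simp [M_nil]
  | cons c s ih => simp [M_cons, ih, mul_assoc]

lemma det_M (l : List ℤ) : (M l).det = 1 := by
  induction l with
  | nil => simp [M_nil]
  | cons c t ih => rw [M_cons, det_mul, ih, one_mul]; simp [E, Matrix.det_fin_two_of]

lemma EE0 (a b : ℤ) : E b * E 0 * E a = -E (a + b) := by
  ext i j
  fin_cases i <;> fin_cases j <;> simp [E, Matrix.mul_apply, Fin.sum_univ_two] <;> ring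

lemma EE1 (a b : ℤ) : E b * E 1 * E a = E (b-1) * E (a-1) := by
  ext i j
  fin_cases i <;> fin_cases j <;> simp [E, Matrix.mul_apply, Fin.sum_univ_two] <;> ring

lemma E0E0 : E 0 * E 0 = -1 := by
  ext i j
  fin_cases i <;> fin_cases j <;> simp [E, Matrix.mul_apply, Fin.sum_univ_two]

lemma M_swap (s t : List ℤ) (ε : ℤ) (hε : ε = 1 ∨ ε = -1)
    (h : M (s ++ t) = ε • 1) : M (t ++ s) = ε • 1 := by
  rw [M_append] at h ⊢
  have hu : IsUnit (M s * M t) := by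
    rw [Matrix.isUnit_iff_isUnit_det, det_mul, det_M, det_M, one_mul]
    exact isUnit_one
  have h2 : (M s * M t) * (M s * M t) = (ε • 1) * (M s * M t) := by
    calc (M s * M t) * (M s * M t) = M s * (M t * M s) * M t := by
          rw [mul_assoc, mul_assoc, mul_assoc]
    _ = M s * (ε • 1) * M t := by rw [h]
    _ = (ε • 1) * (M s * M t) := by
        rw [mul_smul_comm, smul_mul_assoc, smul_mul_assoc, mul_one, one_mul]
  exact hu.mul_right_cancel h2

lemma grow (l : List ℤ) : l ≠ [] → (∀ a ∈ l, 2 ≤ a) →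
    1 ≤ (M l) 1 0 ∧ (M l) 1 0 < (M l) 0 0 := by
  induction l using List.reverseRecOn with
  | nil => intro h; exact absurd rfl h
  | append_singleton t c ih =>
    intro _ hall
    have hc : 2 ≤ c := hall c (by simp)
    have key : M (t ++ [c]) = E c * M t := by
      rw [M_append, M_cons, M_nil, one_mul]
    have e10 : (E c * M t) 1 0 = (M t) 0 0 := by
      simp [E, Matrix.mul_apply, Fin.sum_univ_two]
    have e00 : (E c * M t) 0 0 = c * (M t) 0 0 - (M t) 1 0 := by
      simp [E, Matrix.mul_apply, Fin.sum_univ_two]; ring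
    rcases eq_or_ne t [] with rfl | ht
    · rw [key, M_nil, mul_one]
      refine ⟨by simp [E], ?_⟩
      have h1 : E c 1 0 = 1 := by simp [E]
      have h2 : E c 0 0 = c := by simp [E]
      rw [h1, h2]; linarith
    · obtain ⟨h1, h2⟩ := ih ht (fun a ha => hall a (by simp [ha]))
      rw [key]
      refine ⟨by rw [e10]; linarith, ?_⟩
      rw [e10, e00]
      nlinarith

set_option maxHeartbeats 2000000 in
lemma main_lemma : ∀ (k : ℕ) (l : List ℤ), l.length = k → (∀ a ∈ l, 0 < a) →
    ∀ ε : ℤ, (ε = 1 ∨ ε = -1) → M l = ε • 1 → ∀ c ∈ l, c ≤ (k : ℤ) - 2 := by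
  intro k
  induction k using Nat.strong_induction_on with
  | _ k IH =>
  intro l hlen hpos ε hε hM
  match k, IH with
  | 0, IH =>
    intro c hc
    rw [List.length_eq_zero_iff] at hlen
    subst hlen; simp at hc
  | 1, IH =>
    exfalso
    obtain ⟨u, rfl⟩ := List.length_eq_one_iff.mp hlen
    have h11 := congrFun (congrFun hM 1) 1
    simp [M_cons, M_nil, E, Matrix.smul_apply, Matrix.one_apply] at h11
    omega
  | 2, IH =>
    exfalso
    rcases l with _ | ⟨u, _ | ⟨v, _ | _⟩⟩ <;> simp at hlen
    have h10 := congrFun (congrFun hM 1) 0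
    simp [M_cons, M_nil, E, Matrix.mul_apply, Fin.sum_univ_two,
      Matrix.smul_apply, Matrix.one_apply] at h10
    have := hpos u (by simp)
    omega
  | (k' + 3), IH =>
    have hε' : -ε = 1 ∨ -ε = -1 := by omega
    by_cases h1 : (1 : ℤ) ∈ l
    case neg =>
      exfalso
      have hall : ∀ a ∈ l, 2 ≤ a := by
        intro a ha
        have := hpos a ha
        rcases eq_or_lt_of_le (by omega : (1:ℤ) ≤ a) with h | h
        · exact absurd (h ▸ ha) h1
        · omega
      have hne : l ≠ [] := by intro h; subst h; simp at hlen
      obtain ⟨hg1, _⟩ := grow l hne hall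
      have h10 := congrFun (congrFun hM 1) 0
      simp [Matrix.smul_apply, Matrix.one_apply] at h10
      omega
    case pos =>
      obtain ⟨l1, l2, rfl⟩ := List.append_of_mem h1
      have hswap1 : M ((1 :: l2) ++ l1) = ε • 1 := M_swap l1 (1 :: l2) ε hε hM
      have hlen2 : (l2 ++ l1).length = k' + 2 := by
        simp at hlen ⊢; omega
      rcases List.eq_nil_or_concat (l2 ++ l1) with hnil | ⟨t', a, hta⟩
      · rw [hnil] at hlen2; simp at hlen2
      rw [List.concat_eq_append] at hta
      rcases t' with _ | ⟨b, rest⟩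
      · exfalso
        have := congrArg List.length hta
        simp [hlen2] at this
      have hlenrest : rest.length = k' := by
        have := congrArg List.length hta
        simp [hlen2] at this
        omega
      have hswap2 : M (a :: 1 :: b :: rest) = ε • 1 := by
        have e : ((1 : ℤ) :: b :: rest) ++ [a] = (1 :: l2) ++ l1 := by
          simp only [List.cons_append]
          rw [hta]
          rfl
        have := M_swap (1 :: b :: rest) [a] ε hε (by rw [e]; exact hswap1)
        simpa using this
      have hmem : ∀ c : ℤ, c ∈ l1 ++ 1 :: l2 ↔ (c = a ∨ c = 1 ∨ c = b ∨ c ∈ rest) := by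
        intro c
        have h2 : c ∈ l2 ++ l1 ↔ c ∈ (b :: rest) ++ [a] := by rw [hta]
        simp [List.mem_append] at h2 ⊢
        tauto
      have hposw : ∀ c ∈ ((a : ℤ) :: 1 :: b :: rest), 0 < c := by
        intro c hc
        apply hpos
        rw [hmem c]
        simpa using hc
      have ha : 0 < a := hposw a (by simp)
      have hb : 0 < b := hposw b (by simp)
      have hposr : ∀ c ∈ rest, 0 < c := fun c hc => hposw c (by simp [hc])
      have hred : M ((a-1) :: (b-1) :: rest) = ε • 1 := by
        have h3 : M (a :: 1 :: b :: rest) = M rest * E b * E 1 * E a := by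
          rw [M_cons, M_cons, M_cons]
        have h4 : M ((a-1) :: (b-1) :: rest) = M rest * E (b-1) * E (a-1) := by
          rw [M_cons, M_cons]
        rw [h4, mul_assoc, ← EE1, ← mul_assoc, ← mul_assoc, ← h3]
        exact hswap2
      intro c hc
      rw [hmem c] at hc
      push_cast
      rcases eq_or_lt_of_le (by omega : (1:ℤ) ≤ a) with ha1 | ha2
      · rcases eq_or_lt_of_le (by omega : (1:ℤ) ≤ b) with hb1 | hb2
        · -- a = 1, b = 1
          rw [← ha1, ← hb1, (by norm_num : (1:ℤ) - 1 = 0)] at hred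
          have h5 : M ((0:ℤ) :: 0 :: rest) = -(M rest) := by
            rw [M_cons, M_cons, mul_assoc, E0E0]
            simp
          rw [h5] at hred
          have h6 : M rest = (-ε) • 1 := by
            rw [neg_smul]
            exact neg_eq_iff_eq_neg.mp hred
          have hbd := IH k' (by omega) rest hlenrest hposr (-ε) hε' h6
          rcases hc with rfl | rfl | rfl | hc
          · rw [← ha1]; have := Nat.cast_nonneg (α := ℤ) k'; linarith
          · have := Nat.cast_nonneg (α := ℤ) k'; linarith
          · rw [← hb1]; have := Nat.cast_nonneg (α := ℤ) k'; linarith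
          · have := hbd c hc; linarith
        · -- a = 1, b ≥ 2
          rw [← ha1, (by norm_num : (1:ℤ) - 1 = 0)] at hred
          rcases List.eq_nil_or_concat rest with hnil | ⟨rest', r, hrr⟩
          · exfalso
            subst hnil
            have h01 := congrFun (congrFun hred 0) 1
            simp [M_cons, M_nil, E, Matrix.mul_apply, Fin.sum_univ_two,
              Matrix.smul_apply, Matrix.one_apply] at h01
            omega
          rw [List.concat_eq_append] at hrr
          subst hrr
          have hswap3 : M (r :: 0 :: (b-1) :: rest') = ε • 1 := by
            have := M_swap ((0:ℤ) :: (b-1) :: rest') [r] ε hε (by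
              have e2 : ((0:ℤ) :: (b-1) :: rest') ++ [r] = 0 :: (b-1) :: (rest' ++ [r]) := by simp
              rw [e2]; exact hred)
            simpa using this
          have hsurg : M ((r + (b-1)) :: rest') = (-ε) • 1 := by
            have h7 : M (r :: 0 :: (b-1) :: rest') = M rest' * E (b-1) * E 0 * E r := by
              rw [M_cons, M_cons, M_cons]
            have h8 : E (b-1) * E 0 * E r = -E (r + (b-1)) := EE0 r (b-1)
            have h9 : M ((r + (b-1)) :: rest') = M rest' * E (r + (b-1)) := M_cons _ _
            rw [h7, mul_assoc, mul_assoc, ← mul_assoc (E (b-1)), h8] at hswap3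
            rw [neg_smul]
            rw [h9]
            have : M rest' * -E (r + (b-1)) = ε • 1 := hswap3
            have h10 : -(M rest' * E (r + (b-1))) = ε • 1 := by
              rw [← this]; simp
            exact neg_eq_iff_eq_neg.mp h10
          have hlen' : ((r + (b-1)) :: rest').length = k' := by
            simp at hlenrest ⊢
            omega
          have hposn : ∀ c ∈ ((r + (b-1)) :: rest'), 0 < c := by
            intro c hc'
            rcases List.mem_cons.mp hc' with rfl | hc'
            · have hr : 0 < r := hposr r (by simp)
              omega
            · exact hposr c (by simp [hc'])
          have hbd := IH k' (by omega) _ hlen' hposn (-ε) hε' hsurg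
          have hbd1 := hbd (r + (b-1)) (by simp)
          have hr : 0 < r := hposr r (by simp)
          rcases hc with rfl | rfl | rfl | hc
          · rw [← ha1]; have := Nat.cast_nonneg (α := ℤ) k'; linarith
          · have := Nat.cast_nonneg (α := ℤ) k'; linarith
          · linarith
          · rcases List.mem_append.mp hc with hc | hc
            · have := hbd c (by simp [hc]); linarith
            · simp at hc; subst hc; linarith
      · rcases eq_or_lt_of_le (by omega : (1:ℤ) ≤ b) with hb1 | hb2
        · -- b = 1, a ≥ 2
          rw [← hb1, (by norm_num : (1:ℤ) - 1 = 0)] at hred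
          rcases rest with _ | ⟨s, rest2⟩
          · exfalso
            have h10' := congrFun (congrFun hred 1) 0
            simp [M_cons, M_nil, E, Matrix.mul_apply, Fin.sum_univ_two,
              Matrix.smul_apply, Matrix.one_apply] at h10'
            omega
          have hsurg : M (((a-1) + s) :: rest2) = (-ε) • 1 := by
            have h7 : M ((a-1) :: 0 :: s :: rest2) = M rest2 * E s * E 0 * E (a-1) := by
              rw [M_cons, M_cons, M_cons]
            have h8 : E s * E 0 * E (a-1) = -E ((a-1) + s) := EE0 (a-1) s
            have h9 : M (((a-1) + s) :: rest2) = M rest2 * E ((a-1) + s) := M_cons _ _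
            rw [h7, mul_assoc, mul_assoc, ← mul_assoc (E s), h8] at hred
            rw [neg_smul, h9]
            have h10 : -(M rest2 * E ((a-1) + s)) = ε • 1 := by
              rw [← hred]; simp
            exact neg_eq_iff_eq_neg.mp h10
          have hs : 0 < s := hposr s (by simp)
          have hposn : ∀ c ∈ (((a-1) + s) :: rest2), 0 < c := by
            intro c hc'
            rcases List.mem_cons.mp hc' with rfl | hc'
            · omega
            · exact hposr c (by simp [hc'])
          have hlen' : (((a-1) + s) :: rest2).length = k' := by
            simp at hlenrest ⊢; omega
          have hbd := IH k' (by omega) _ hlen' hposn (-ε) hε' hsurg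
          have hbd1 := hbd ((a-1) + s) (by simp)
          rcases hc with rfl | rfl | rfl | hc
          · linarith
          · have := Nat.cast_nonneg (α := ℤ) k'; linarith
          · rw [← hb1]; have := Nat.cast_nonneg (α := ℤ) k'; linarith
          · rcases List.mem_cons.mp hc with rfl | hc
            · linarith
            · have := hbd c (by simp [hc]); linarith
        · -- a ≥ 2, b ≥ 2
          have hposn : ∀ c ∈ ((a-1) :: (b-1) :: rest), 0 < c := by
            intro c hc'
            rcases List.mem_cons.mp hc' with rfl | hc'
            · omega
            rcases List.mem_cons.mp hc' with rfl | hc'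
            · omega
            · exact hposr c hc'
          have hlen' : ((a-1) :: (b-1) :: rest).length = k' + 2 := by
            simp [hlenrest]
          have hbd := IH (k'+2) (by omega) _ hlen' hposn ε hε hred
          have hba := hbd (a-1) (by simp)
          have hbb := hbd (b-1) (by simp)
          rcases hc with rfl | rfl | rfl | hc
          · push_cast at hba ⊢; linarith
          · have := Nat.cast_nonneg (α := ℤ) k'; linarith
          · push_cast at hbb ⊢; linarith
          · have := hbd c (by simp [hc]); push_cast at this ⊢; linarith

theorem stmt16 (n : ℕ) (hn : 3 ≤ n) (x y : ℤ) (m : List ℤ) (hm : m.length = n)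
    (hx : 0 < x) (hy : 0 < y) (hpos : ∀ a ∈ m, 0 < a)
    (h : M (x :: m ++ [y]) = S ∨ M (x :: m ++ [y]) = -S) :
    2 ≤ x + y ∧ x + y ≤ (n : ℤ) - 1 := by
  obtain ⟨ε, hε, hL⟩ : ∃ ε : ℤ, (ε = 1 ∨ ε = -1) ∧ M (x :: m ++ [y]) = ε • S := by
    rcases h with h | h
    · exact ⟨1, Or.inl rfl, by simpa using h⟩
    · exact ⟨-1, Or.inr rfl, by simpa using h⟩
  have hε' : -ε = 1 ∨ -ε = -1 := by omega
  have hSE : S = E 0 := by norm_num [S, E]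
  have h0 : M ((x :: m) ++ [y, 0]) = (-ε) • 1 := by
    have e : (x :: m) ++ [y, 0] = (x :: m ++ [y]) ++ [0] := by simp
    rw [e, M_append, hL, M_cons, M_nil, one_mul, ← hSE]
    rw [mul_smul_comm, show S * S = (-1 : Matrix (Fin 2) (Fin 2) ℤ) from by
      rw [hSE]; exact E0E0]
    rw [smul_neg, neg_smul]
  have h1 : M (y :: 0 :: x :: m) = (-ε) • 1 := by
    have := M_swap (x :: m) [y, 0] (-ε) hε' h0
    simpa using this
  have hsurg : M ((y + x) :: m) = ε • 1 := by
    have h7 : M (y :: 0 :: x :: m) = M m * E x * E 0 * E y := by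
      rw [M_cons, M_cons, M_cons]
    have h8 : E x * E 0 * E y = -E (y + x) := EE0 y x
    have h9 : M ((y + x) :: m) = M m * E (y + x) := M_cons _ _
    rw [h7, mul_assoc, mul_assoc, ← mul_assoc (E x), h8] at h1
    have h10 : -(M m * E (y + x)) = (-ε) • 1 := by
      rw [← h1]; simp
    rw [h9]
    have := neg_eq_iff_eq_neg.mp h10
    rw [this, neg_smul, neg_neg]
  have hposn : ∀ c ∈ ((y + x) :: m), 0 < c := by
    intro c hc
    rcases List.mem_cons.mp hc with rfl | hc
    · omega
    · exact hpos c hc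
  have hlen : ((y + x) :: m).length = n + 1 := by simp [hm]
  have hbd := main_lemma (n + 1) _ hlen hposn ε hε hsurg (y + x) (by simp)
  push_cast at hbd
  constructor
  · omega
  · linarith
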